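/- Let T be a caterpillar on n vertices whose spine consists of k vertices (k ≥ 1, each spine vertex has degree at least 2 and maximum degree at least 3). Then every spine vertex v satisfies ecc_3(v,T) = k + 1, every leaf v satisfies ecc_3(v,T) = k + 2, and consequently aecc_3(T) = ((n-1)k + 2n)/n. -/

import Mathlib

open SimpleGraph Finset

/-- The Steiner distance of a vertex set `S` in `G`: the minimum number of edges of a
connected subgraph of `G` whose vertex set contains `S`. -/
noncomputable def steinerDist {V : Type*} [Fintype V] (G : SimpleGraph V) (S : Set V) : ℕ :=
  sInf {n | ∃ H : G.Subgraph, H.Connected ∧ S ⊆ H.verts ∧ H.edgeSet.ncard = n}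

/-- The Steiner 3-eccentricity of a vertex `v`: the maximum Steiner distance over
3-subsets of vertices containing `v`. -/
noncomputable def ecc3 {V : Type*} [Fintype V] [DecidableEq V] (G : SimpleGraph V) (v : V) : ℕ :=
  sSup {n | ∃ S : Finset V, v ∈ S ∧ S.card = 3 ∧ steinerDist G (S : Set V) = n}

/-- The average Steiner 3-eccentricity of `G`. -/
noncomputable def aecc3 {V : Type*} [Fintype V] [DecidableEq V] (G : SimpleGraph V) : ℚ :=
  (∑ v : V, (ecc3 G v : ℚ)) / (Fintype.card V : ℚ)

/-- A walk is a segment if it is a nontrivial path whose endpoints do not have degree 2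
and all of whose internal vertices have degree 2. -/
def IsSegment {V : Type*} [Fintype V] (G : SimpleGraph V) [DecidableRel G.Adj] {u v : V}
    (p : G.Walk u v) : Prop :=
  p.IsPath ∧ 0 < p.length ∧ G.degree u ≠ 2 ∧ G.degree v ≠ 2 ∧
    ∀ w ∈ p.support, w ≠ u → w ≠ v → G.degree w = 2

/-- `G` has segment sequence `l`: its edge set is partitioned into segments whose
lengths are given by `l`. -/
def HasSegmentSequence {V : Type*} [Fintype V] (G : SimpleGraph V) [DecidableRel G.Adj]
    {m : ℕ} (l : Fin m → ℕ) : Prop :=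
  ∃ (u v : Fin m → V) (p : ∀ i, G.Walk (u i) (v i)),
    (∀ i, IsSegment G (p i)) ∧
    (∀ i j, i ≠ j → ∀ e ∈ (p i).edges, e ∉ (p j).edges) ∧
    (∀ e ∈ G.edgeSet, ∃ i, e ∈ (p i).edges) ∧
    (∀ i, (p i).length = l i)

/-- A caterpillar: a tree whose internal (non-leaf) vertices induce a path. -/
def IsCaterpillar {V : Type*} [Fintype V] (G : SimpleGraph V) [DecidableRel G.Adj] : Prop :=
  G.IsTree ∧ ∃ k : ℕ, Nonempty ((G.induce {v | 2 ≤ G.degree v}) ≃g SimpleGraph.pathGraph k)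

/-- Majorization of finite sequences. -/
def Majorizes {n : ℕ} (x y : Fin n → ℕ) : Prop :=
  (∀ k : ℕ, k < n →
    ∑ i ∈ Finset.univ.filter (fun i : Fin n => (i : ℕ) < k), y i ≤
    ∑ i ∈ Finset.univ.filter (fun i : Fin n => (i : ℕ) < k), x i) ∧
  ∑ i, x i = ∑ i, y i

/-- Distance from a vertex `u` to (the support of) a walk `p`. -/
noncomputable def distToPath {V : Type*} (G : SimpleGraph V) {a b : V} (p : G.Walk a b)
    (u : V) : ℕ :=
  sInf {n | ∃ w ∈ p.support, G.dist u w = n}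

/-- The eccentricity of a walk `p`: the maximum distance from a vertex to `p`. -/
noncomputable def eccPath {V : Type*} [Fintype V] (G : SimpleGraph V) {a b : V}
    (p : G.Walk a b) : ℕ :=
  sSup {n | ∃ u : V, distToPath G p u = n}

/-- `G` is a broom `B_{n,Δ}`: obtained from a path on `n - Δ + 2` vertices by attaching
`Δ - 2` pendant vertices to an internal vertex of the path. -/
def IsBroom {V : Type*} [Fintype V] (G : SimpleGraph V) (Δ : ℕ) : Prop :=
  ∃ (a b c : V) (p : G.Walk a b), p.IsPath ∧
    p.support.length = Fintype.card V - Δ + 2 ∧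
    c ∈ p.support ∧ c ≠ a ∧ c ≠ b ∧ ∀ v, v ∉ p.support → G.Adj c v

section Helpers
set_option linter.unusedSectionVars false

variable {V : Type*} [Fintype V] [DecidableEq V] {G : SimpleGraph V} [DecidableRel G.Adj]

lemma subgraph_acyclic (hG : G.IsAcyclic) (H : G.Subgraph) : H.coe.IsAcyclic := by
  intro v c hc
  exact hG (c.map H.hom) (hc.map Subgraph.hom_injective)

lemma subgraph_edge_count (hT : G.IsTree) (H : G.Subgraph) (hH : H.Connected) :
    H.edgeSet.ncard = H.verts.ncard - 1 := by
  classical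
  letI : Fintype ↥H.verts := Fintype.ofFinite _
  letI : Fintype ↥H.coe.edgeSet := Fintype.ofFinite _
  have htree : H.coe.IsTree := ⟨hH.coe, subgraph_acyclic hT.2 H⟩
  have h1 : H.coe.edgeFinset.card + 1 = Fintype.card ↥H.verts := htree.card_edgeFinset
  have h2 : H.edgeSet.ncard = H.coe.edgeSet.ncard := by
    rw [← Subgraph.image_coe_edgeSet_coe]
    exact Set.ncard_image_of_injective _ (Sym2.map.injective Subtype.val_injective)
  rw [h2, Set.ncard_eq_toFinset_card', Set.ncard_eq_toFinset_card']
  rw [← Set.toFinset_card (s := H.verts)] at h1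
  have : H.coe.edgeFinset = H.coe.edgeSet.toFinset := rfl
  rw [← this]; omega

lemma path_support_subset (hT : G.IsTree) {a b : V} (P : G.Walk a b) (hP : P.IsPath)
    (H : G.Subgraph) (hH : H.Connected) (ha : a ∈ H.verts) (hb : b ∈ H.verts) :
    ∀ x ∈ P.support, x ∈ H.verts := by
  obtain ⟨W⟩ := hH.coe.preconnected ⟨a, ha⟩ ⟨b, hb⟩
  have hmap : (W.map H.hom : G.Walk a b).bypass.IsPath := Walk.bypass_isPath _
  have huniq := (hT.existsUnique_path a b).unique hP hmap
  intro x hx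
  rw [huniq] at hx
  have hx' := Walk.support_bypass_subset _ hx
  erw [Walk.support_map] at hx'
  obtain ⟨z, _, rfl⟩ := List.mem_map.mp hx'
  exact z.2

lemma internal_degree {a b : V} (P : G.Walk a b) (hP : P.IsPath) :
    ∀ x ∈ P.support, x ≠ a → x ≠ b → 2 ≤ G.degree x := by
  intro x hx hxa hxb
  obtain ⟨q, r, rfl⟩ := Walk.mem_support_iff_exists_append.mp hx
  have hq : ¬ q.Nil := by
    intro h; exact hxa (Walk.Nil.eq h).symm
  have hr : ¬ r.Nil := by
    intro h; exact hxb (Walk.Nil.eq h)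
  have hqr : ¬ q.reverse.Nil := Walk.not_nil_of_ne (fun h => hxa h)
  set u1 := q.reverse.getVert 1 with hu1
  set u2 := r.getVert 1 with hu2
  have hadj1 : G.Adj x u1 := q.reverse.adj_snd hqr
  have hadj2 : G.Adj x u2 := r.adj_snd hr
  have hmem1 : u1 ∈ q.support := by
    have h0 : u1 ∈ q.reverse.support.tail := by
      rw [← Walk.support_tail_of_not_nil _ hqr]
      exact Walk.start_mem_support _
    have : u1 ∈ q.reverse.support := List.mem_of_mem_tail h0
    rwa [Walk.support_reverse, List.mem_reverse] at this
  have hmem2 : u2 ∈ r.support.tail := by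
    rw [← Walk.support_tail_of_not_nil r hr]
    exact Walk.start_mem_support _
  have hnodup := hP.support_nodup
  rw [Walk.support_append] at hnodup
  have hdisj := List.disjoint_of_nodup_append hnodup
  have hne : u1 ≠ u2 := fun h => hdisj hmem1 (h ▸ hmem2)
  have : 1 < (G.neighborFinset x).card := by
    apply Finset.one_lt_card.mpr
    exact ⟨u1, by simp [hadj1], u2, by simp [hadj2], hne⟩
  rwa [G.card_neighborFinset_eq_degree] at this

lemma spine_walk {k : ℕ} (f : ℕ → V) (hadj : ∀ i, i + 1 < k → G.Adj (f i) (f (i + 1))) :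
    ∀ i, i < k → ∃ P : G.Walk (f 0) (f i), P.support = (List.range (i + 1)).map f := by
  intro i
  induction i with
  | zero => intro _; exact ⟨Walk.nil, by simp [List.range_succ]⟩
  | succ n ih =>
    intro hn
    obtain ⟨P, hP⟩ := ih (by omega)
    refine ⟨P.concat (hadj n hn), ?_⟩
    rw [Walk.support_concat, hP]
    rw [List.range_succ (n := n + 1), List.map_append]
    simp

lemma subgraph_connected_sup {H K : G.Subgraph} (hH : H.Connected) (hK : K.Connected)
    (hn : (H ⊓ K).verts.Nonempty) : (H ⊔ K).Connected :=
  Subgraph.connected_sup hH.preconnected hK.preconnected hn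

lemma steiner_upper (hT : G.IsTree) {b0 : V} (hb0 : 2 ≤ G.degree b0) (x y z : V) :
    ∃ H : G.Subgraph, H.Connected ∧ ({x, y, z} : Set V) ⊆ H.verts ∧
      H.verts ⊆ {v | 2 ≤ G.degree v} ∪ {x, y, z} := by
  have hP : ∀ t : V, ∃ P : G.Walk b0 t, P.IsPath := fun t =>
    ⟨(hT.isConnected.preconnected b0 t).some.bypass, Walk.bypass_isPath _⟩
  obtain ⟨Px, hPx⟩ := hP x
  obtain ⟨Py, hPy⟩ := hP y
  obtain ⟨Pz, hPz⟩ := hP z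
  refine ⟨Px.toSubgraph ⊔ Py.toSubgraph ⊔ Pz.toSubgraph, ?_, ?_, ?_⟩
  · apply subgraph_connected_sup
    · apply subgraph_connected_sup (Px.toSubgraph_connected) (Py.toSubgraph_connected)
      exact ⟨b0, Px.start_mem_verts_toSubgraph, Py.start_mem_verts_toSubgraph⟩
    · exact Pz.toSubgraph_connected
    · exact ⟨b0, Or.inl Px.start_mem_verts_toSubgraph, Pz.start_mem_verts_toSubgraph⟩
  · intro t ht
    simp only [Subgraph.verts_sup, Set.mem_union]
    rcases ht with rfl | rfl | rfl
    · exact Or.inl (Or.inl Px.end_mem_verts_toSubgraph)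
    · exact Or.inl (Or.inr Py.end_mem_verts_toSubgraph)
    · exact Or.inr Pz.end_mem_verts_toSubgraph
  · intro t ht
    simp only [Subgraph.verts_sup, Set.mem_union, Walk.mem_verts_toSubgraph] at ht
    have key : ∀ (c : V) (P : G.Walk b0 c), P.IsPath → t ∈ P.support →
        t ∈ {v | 2 ≤ G.degree v} ∪ {x, y, z} ∨ t = c := by
      intro c P hPp htP
      by_cases h1 : t = c
      · exact Or.inr h1
      by_cases h2 : t = b0
      · exact Or.inl (Or.inl (h2 ▸ hb0))
      · exact Or.inl (Or.inl (internal_degree P hPp t htP h2 h1))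
    rcases ht with (h | h) | h
    · rcases key x Px hPx h with h' | rfl
      · exact h'
      · exact Or.inr (by simp)
    · rcases key y Py hPy h with h' | rfl
      · exact h'
      · exact Or.inr (by simp)
    · rcases key z Pz hPz h with h' | rfl
      · exact h'
      · exact Or.inr (by simp)

end Helpers

theorem stmt_8 {V : Type*} [Fintype V] [DecidableEq V] (G : SimpleGraph V) [DecidableRel G.Adj]
    (hT : G.IsTree) (hn : 4 ≤ Fintype.card V) (hΔ : ∃ v, 3 ≤ G.degree v)
    (k : ℕ) (hk : 1 ≤ k)
    (hspine : Nonempty ((G.induce {v | 2 ≤ G.degree v}) ≃g SimpleGraph.pathGraph k)) :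
    (∀ v, 2 ≤ G.degree v → ecc3 G v = k + 1) ∧
    (∀ v, G.degree v = 1 → ecc3 G v = k + 2) ∧
    aecc3 G = (((Fintype.card V : ℚ) - 1) * k + 2 * (Fintype.card V : ℚ)) /
      (Fintype.card V : ℚ) := by
  classical
  obtain ⟨e⟩ := hspine
  set Sp : Set V := {v | 2 ≤ G.degree v} with hSpdef
  set wnat : ℕ → V := fun i => if h : i < k then (e.symm ⟨i, h⟩ : V) else (e.symm ⟨0, hk⟩ : V)
    with hwdef
  have hwmem : ∀ i, i < k → wnat i ∈ Sp := by
    intro i hi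
    simp only [hwdef, dif_pos hi]
    exact (e.symm ⟨i, hi⟩).2
  have hwinj : ∀ i j, i < k → j < k → wnat i = wnat j → i = j := by
    intro i j hi hj hij
    simp only [hwdef, dif_pos hi, dif_pos hj] at hij
    have := e.symm.injective (Subtype.ext hij)
    exact Fin.mk.injEq .. ▸ (Fin.mk.injEq i hi j hj ▸ congrArg Fin.val this)
  have hwsurj : ∀ v ∈ Sp, ∃ i, i < k ∧ wnat i = v := by
    intro v hv
    refine ⟨(e ⟨v, hv⟩).1, (e ⟨v, hv⟩).2, ?_⟩
    simp only [hwdef, dif_pos (e ⟨v, hv⟩).2]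
    have : (⟨(e ⟨v, hv⟩).1, (e ⟨v, hv⟩).2⟩ : Fin k) = e ⟨v, hv⟩ := rfl
    rw [this, e.symm_apply_apply]
  have hadjiff : ∀ i j, i < k → j < k → (G.Adj (wnat i) (wnat j) ↔ (j = i + 1 ∨ i = j + 1)) := by
    intro i j hi hj
    simp only [hwdef, dif_pos hi, dif_pos hj]
    have h1 : G.Adj ↑(e.symm ⟨i, hi⟩) ↑(e.symm ⟨j, hj⟩) ↔
        (G.induce Sp).Adj (e.symm ⟨i, hi⟩) (e.symm ⟨j, hj⟩) := by
      simp [comap_adj]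
    rw [h1, e.symm.map_adj_iff, pathGraph_adj]
    show i + 1 = j ∨ j + 1 = i ↔ j = i + 1 ∨ i = j + 1
    omega
  -- spine-neighbor counting
  have hSNmem : ∀ i x, i < k → x ∈ (G.neighborFinset (wnat i)).filter (fun y => 2 ≤ G.degree y) →
      ∃ j, j < k ∧ x = wnat j ∧ (j = i + 1 ∨ i = j + 1) := by
    intro i x hi hx
    rw [Finset.mem_filter, mem_neighborFinset] at hx
    obtain ⟨j, hj, rfl⟩ := hwsurj x hx.2
    exact ⟨j, hj, rfl, (hadjiff i j hi hj).mp hx.1⟩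
  have hSN2 : ∀ i, i < k →
      ((G.neighborFinset (wnat i)).filter (fun y => 2 ≤ G.degree y)).card ≤ 2 := by
    intro i hi
    have hsub : (G.neighborFinset (wnat i)).filter (fun y => 2 ≤ G.degree y) ⊆
        {wnat (i + 1), wnat (i - 1)} := by
      intro x hx
      obtain ⟨j, hj, rfl, hj2⟩ := hSNmem i x hi hx
      rcases hj2 with h | h
      · subst h; exact Finset.mem_insert_self _ _
      · have : j = i - 1 := by omega
        subst this; exact Finset.mem_insert_of_mem (Finset.mem_singleton_self _)
    calc ((G.neighborFinset (wnat i)).filter (fun y => 2 ≤ G.degree y)).card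
        ≤ ({wnat (i + 1), wnat (i - 1)} : Finset V).card := Finset.card_le_card hsub
      _ ≤ 2 := (Finset.card_insert_le _ _).trans (by simp)
  have hSN0 : ((G.neighborFinset (wnat 0)).filter (fun y => 2 ≤ G.degree y)).card ≤ 1 := by
    rw [Finset.card_le_one]
    intro a ha b hb
    obtain ⟨j, hj, rfl, hj2⟩ := hSNmem 0 a (by omega) ha
    obtain ⟨j', hj', rfl, hj2'⟩ := hSNmem 0 b (by omega) hb
    have : j = j' := by omega
    rw [this]
  have hSN0' : k = 1 → ((G.neighborFinset (wnat 0)).filter (fun y => 2 ≤ G.degree y)) = ∅ := by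
    intro hk1
    rw [Finset.eq_empty_iff_forall_notMem]
    intro x hx
    obtain ⟨j, hj, rfl, hj2⟩ := hSNmem 0 x (by omega) hx
    omega
  have hSNl : ((G.neighborFinset (wnat (k - 1))).filter (fun y => 2 ≤ G.degree y)).card ≤ 1 := by
    rw [Finset.card_le_one]
    intro a ha b hb
    obtain ⟨j, hj, rfl, hj2⟩ := hSNmem (k - 1) a (by omega) ha
    obtain ⟨j', hj', rfl, hj2'⟩ := hSNmem (k - 1) b (by omega) hb
    have : j = j' := by omega
    rw [this]
  -- nonspine neighbor counts
  have hNN : ∀ i, i < k →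
      ((G.neighborFinset (wnat i)).filter (fun y => ¬ 2 ≤ G.degree y)).card
        + ((G.neighborFinset (wnat i)).filter (fun y => 2 ≤ G.degree y)).card
        = G.degree (wnat i) := by
    intro i hi
    rw [add_comm]
    exact Finset.card_filter_add_card_filter_not (fun y => 2 ≤ G.degree y)
  have hNNmem : ∀ i x, i < k →
      x ∈ (G.neighborFinset (wnat i)).filter (fun y => ¬ 2 ≤ G.degree y) →
      G.Adj (wnat i) x ∧ x ∉ Sp := by
    intro i x hi hx
    rw [Finset.mem_filter, mem_neighborFinset] at hx
    exact ⟨hx.1, hx.2⟩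
  have hleaf_unique : ∀ x, x ∉ Sp → ∀ a b, G.Adj x a → G.Adj x b → a = b := by
    intro x hx a b ha hb
    have hc : (G.neighborFinset x).card ≤ 1 := by
      have h1 : ¬ 2 ≤ G.degree x := hx
      have h2 : (G.neighborFinset x).card = G.degree x := G.card_neighborFinset_eq_degree x
      omega
    exact Finset.card_le_one.mp hc a ((mem_neighborFinset G x a).mpr ha)
      b ((mem_neighborFinset G x b).mpr hb)
  have hdeg : ∀ i, i < k → 2 ≤ G.degree (wnat i) := fun i hi => hwmem i hi
  obtain ⟨u, hu3⟩ := hΔ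
  obtain ⟨t, ht, rfl⟩ := hwsurj u (by exact le_trans (by norm_num) hu3)
  have hpqr : ∃ p q r : V, G.Adj (wnat 0) p ∧ G.Adj (wnat (k - 1)) q ∧
      p ∉ Sp ∧ q ∉ Sp ∧ r ∉ Sp ∧ p ≠ q ∧ r ≠ p ∧ r ≠ q := by
    by_cases hk1 : k = 1
    · have ht0 : t = 0 := by omega
      have h3 : 3 ≤ ((G.neighborFinset (wnat 0)).filter (fun y => ¬ 2 ≤ G.degree y)).card := by
        have := hNN 0 (by omega)
        rw [hSN0' hk1] at this
        simp only [Finset.card_empty, add_zero] at this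
        rw [this, ← ht0]
        exact hu3
      obtain ⟨s3, hs3sub, hs3card⟩ := Finset.exists_subset_card_eq h3
      obtain ⟨a, b, c, hab, hac, hbc, rfl⟩ := Finset.card_eq_three.mp hs3card
      have hma := hNNmem 0 a (by omega) (hs3sub (by simp))
      have hmb := hNNmem 0 b (by omega) (hs3sub (by simp))
      have hmc := hNNmem 0 c (by omega) (hs3sub (by simp))
      refine ⟨a, b, c, hma.1, ?_, hma.2, hmb.2, hmc.2, hab, hac.symm, hbc.symm⟩
      rw [hk1]; exact hmb.1
    · have hk2 : 2 ≤ k := by omega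
      have hw0l : wnat 0 ≠ wnat (k - 1) := by
        intro h; have := hwinj 0 (k - 1) (by omega) (by omega) h; omega
      have hNN0 : 1 ≤ ((G.neighborFinset (wnat 0)).filter (fun y => ¬ 2 ≤ G.degree y)).card := by
        have h1 := hNN 0 (by omega); have h2 := hdeg 0 (by omega); omega
      have hNNl : 1 ≤ ((G.neighborFinset (wnat (k - 1))).filter
          (fun y => ¬ 2 ≤ G.degree y)).card := by
        have h1 := hNN (k - 1) (by omega); have h2 := hdeg (k - 1) (by omega); omega
      obtain ⟨p, hp⟩ := Finset.card_pos.mp (by omega : 0 < ((G.neighborFinset (wnat 0)).filter (fun y => ¬ 2 ≤ G.degree y)).card)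
      obtain ⟨q, hq⟩ := Finset.card_pos.mp (by omega : 0 < ((G.neighborFinset (wnat (k - 1))).filter (fun y => ¬ 2 ≤ G.degree y)).card)
      have hpm := hNNmem 0 p (by omega) hp
      have hqm := hNNmem (k - 1) q (by omega) hq
      have hpq : p ≠ q := by
        rintro rfl
        exact hw0l (hleaf_unique p hpm.2 (wnat 0) (wnat (k - 1)) hpm.1.symm hqm.1.symm)
      have hNNt : 1 ≤ ((G.neighborFinset (wnat t)).filter (fun y => ¬ 2 ≤ G.degree y)).card := by
        have h1 := hNN t ht; have h2 := hSN2 t ht; omega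
      obtain ⟨y, hy⟩ := Finset.card_pos.mp (by omega : 0 < ((G.neighborFinset (wnat t)).filter (fun y => ¬ 2 ≤ G.degree y)).card)
      have hym := hNNmem t y ht hy
      by_cases hyp : y = p
      · -- then wnat t = wnat 0, use 2 nonspine nbrs at wnat 0
        have ht0 : wnat t = wnat 0 :=
          hleaf_unique p hpm.2 (wnat t) (wnat 0) (hyp ▸ hym.1.symm) hpm.1.symm
        have h2 : 2 ≤ ((G.neighborFinset (wnat 0)).filter (fun y => ¬ 2 ≤ G.degree y)).card := by
          have h0 := hNN 0 (by omega)
          have : 3 ≤ G.degree (wnat 0) := ht0 ▸ hu3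
          omega
        obtain ⟨r, hr, hrp⟩ := Finset.exists_mem_ne
          (s := (G.neighborFinset (wnat 0)).filter (fun y => ¬ 2 ≤ G.degree y)) (by omega) p
        have hrm := hNNmem 0 r (by omega) hr
        have hrq : r ≠ q := by
          rintro rfl
          exact hw0l (hleaf_unique r hrm.2 (wnat 0) (wnat (k - 1)) hrm.1.symm hqm.1.symm)
        exact ⟨p, q, r, hpm.1, hqm.1, hpm.2, hqm.2, hrm.2, hpq, hrp, hrq⟩
      · by_cases hyq : y = q
        · have htl : wnat t = wnat (k - 1) :=
            hleaf_unique q hqm.2 (wnat t) (wnat (k - 1)) (hyq ▸ hym.1.symm) hqm.1.symm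
          have h2 : 2 ≤ ((G.neighborFinset (wnat (k - 1))).filter
              (fun y => ¬ 2 ≤ G.degree y)).card := by
            have h0 := hNN (k - 1) (by omega)
            have : 3 ≤ G.degree (wnat (k - 1)) := htl ▸ hu3
            omega
          obtain ⟨r, hr, hrq⟩ := Finset.exists_mem_ne
            (s := (G.neighborFinset (wnat (k - 1))).filter (fun y => ¬ 2 ≤ G.degree y)) (by omega) q
          have hrm := hNNmem (k - 1) r (by omega) hr
          have hrp : r ≠ p := by
            rintro rfl
            exact hw0l (hleaf_unique r hrm.2 (wnat 0) (wnat (k - 1)) hpm.1.symm hrm.1.symm)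
          exact ⟨p, q, r, hpm.1, hqm.1, hpm.2, hqm.2, hrm.2, hpq, hrp, hrq⟩
        · exact ⟨p, q, y, hpm.1, hqm.1, hpm.2, hqm.2, hym.2, hpq, hyp, hyq⟩
  obtain ⟨p, q, r, hpadj, hqadj, hpSp, hqSp, hrSp, hpq, hrp, hrq⟩ := hpqr
  -- the backbone path from p to q
  have hadjchain : ∀ i, i + 1 < k → G.Adj (wnat i) (wnat (i + 1)) :=
    fun i hi => (hadjiff i (i + 1) (by omega) hi).mpr (Or.inl rfl)
  obtain ⟨P0, hP0sup⟩ := spine_walk wnat hadjchain (k - 1) (by omega)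
  have hk1 : k - 1 + 1 = k := by omega
  rw [hk1] at hP0sup
  set full : G.Walk p q := Walk.cons hpadj.symm (P0.concat hqadj) with hfulldef
  have hfullsup : full.support = p :: ((List.range k).map wnat ++ [q]) := by
    rw [hfulldef, Walk.support_cons, Walk.support_concat, hP0sup]
  have hmapmem : ∀ x ∈ (List.range k).map wnat, x ∈ Sp := by
    intro x hx
    obtain ⟨j, hj, rfl⟩ := List.mem_map.mp hx
    exact hwmem j (List.mem_range.mp hj)
  have hfullpath : full.IsPath := by
    rw [Walk.isPath_def, hfullsup]
    refine List.Nodup.cons ?_ (List.Nodup.append ?_ ?_ ?_)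
    · intro hmem
      rcases List.mem_append.mp hmem with h | h
      · exact hpSp (hmapmem p h)
      · exact hpq (List.mem_singleton.mp h)
    · refine List.Nodup.map_on ?_ (List.nodup_range)
      intro a ha b hb hab
      exact hwinj a b (List.mem_range.mp ha) (List.mem_range.mp hb) hab
    · exact List.nodup_singleton q
    · intro a ha hb
      rw [List.mem_singleton] at hb
      subst hb
      exact hqSp (hmapmem a ha)
  have hverts_low : ∀ H : G.Subgraph, H.Connected → p ∈ H.verts → q ∈ H.verts →
      Sp ∪ {p, q} ⊆ H.verts := by
    intro H hconn hp hq
    have hsub := path_support_subset hT full hfullpath H hconn hp hq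
    intro x hx
    rcases hx with hx | hx
    · obtain ⟨j, hj, rfl⟩ := hwsurj x hx
      apply hsub
      rw [hfullsup]
      exact List.mem_cons_of_mem _ (List.mem_append_left _
        (List.mem_map.mpr ⟨j, List.mem_range.mpr hj, rfl⟩))
    · rcases hx with rfl | rfl
      · exact hp
      · exact hq
  have hSpcard : Sp.ncard = k := by
    rw [← Nat.card_coe_set_eq, Nat.card_congr e.toEquiv]
    simp
  -- generic upper bound machinery
  have hub : ∀ S : Finset V, S.card = 3 → ∃ m, (∃ H : G.Subgraph, H.Connected ∧
      ↑S ⊆ H.verts ∧ H.edgeSet.ncard = m) ∧ m ≤ (Sp ∪ ↑S).ncard - 1 := by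
    intro S hcard
    obtain ⟨x, y, z, hxy, hxz, hyz, rfl⟩ := Finset.card_eq_three.mp hcard
    obtain ⟨H, hconn, hsub, hverts⟩ := steiner_upper hT
      (show 2 ≤ G.degree (wnat 0) from hwmem 0 (by omega)) x y z
    have hcoe : (↑({x, y, z} : Finset V) : Set V) = ({x, y, z} : Set V) := by simp
    refine ⟨H.edgeSet.ncard, ⟨H, hconn, by rw [hcoe]; exact hsub, rfl⟩, ?_⟩
    rw [subgraph_edge_count hT H hconn]
    have h1 : H.verts.ncard ≤ (Sp ∪ ↑({x, y, z} : Finset V)).ncard := by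
      apply Set.ncard_le_ncard _ (Set.toFinite _)
      rw [hcoe]
      exact hverts
    omega
  have hne3 : ∀ S : Finset V, S.card = 3 →
      {n | ∃ H : G.Subgraph, H.Connected ∧ ↑S ⊆ H.verts ∧ H.edgeSet.ncard = n}.Nonempty := by
    intro S hS
    obtain ⟨m, hm, _⟩ := hub S hS
    exact ⟨m, hm⟩
  have hsd_le : ∀ S : Finset V, S.card = 3 →
      steinerDist G ↑S ≤ (Sp ∪ ↑S).ncard - 1 := by
    intro S hS
    obtain ⟨m, hm, hm2⟩ := hub S hS
    exact le_trans (Nat.sInf_le hm) hm2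
  -- lower bound machinery
  have hsd_ge : ∀ (S : Finset V) (T : Set V), S.card = 3 →
      (∀ H : G.Subgraph, H.Connected → ↑S ⊆ H.verts → T ⊆ H.verts) →
      T.ncard - 1 ≤ steinerDist G ↑S := by
    intro S T hS hT'
    apply le_csInf (hne3 S hS)
    rintro n ⟨H, hconn, hsub, rfl⟩
    rw [subgraph_edge_count hT H hconn]
    have := Set.ncard_le_ncard (hT' H hconn hsub) (Set.toFinite _)
    omega
  -- cardinalities
  have hpq_card : (Sp ∪ {p, q}).ncard = k + 2 := by
    rw [Set.union_comm, Set.insert_union, Set.singleton_union,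
      Set.ncard_insert_of_notMem (by simp [hpq, hpSp]),
      Set.ncard_insert_of_notMem (by simp [hqSp]), hSpcard]
  have hsd_vpq : ∀ v ∈ Sp, steinerDist G ↑({v, p, q} : Finset V) = k + 1 := by
    intro v hv
    have hvp : v ≠ p := fun h => hpSp (h ▸ hv)
    have hvq : v ≠ q := fun h => hqSp (h ▸ hv)
    have hcard : ({v, p, q} : Finset V).card = 3 := by
      rw [Finset.card_insert_of_notMem (by simp [hvp, hvq]),
        Finset.card_insert_of_notMem (by simp [hpq])]
      rfl
    have hcoe : (↑({v, p, q} : Finset V) : Set V) = ({v, p, q} : Set V) := by simp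
    apply le_antisymm
    · have h1 := hsd_le _ hcard
      have h2 : Sp ∪ ↑({v, p, q} : Finset V) = Sp ∪ {p, q} := by
        rw [hcoe]
        ext x
        simp only [Set.mem_union, Set.mem_insert_iff, Set.mem_singleton_iff]
        constructor
        · rintro (h | rfl | h) <;> [exact Or.inl h; exact Or.inl hv; exact Or.inr h]
        · rintro (h | h) <;> [exact Or.inl h; exact Or.inr (Or.inr h)]
      rw [h2, hpq_card] at h1
      omega
    · have h := hsd_ge ({v, p, q} : Finset V) (Sp ∪ {p, q}) hcard ?_
      · rw [hpq_card] at h; omega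
      · intro H hconn hsub
        apply hverts_low H hconn
        · exact hsub (by rw [hcoe]; simp)
        · exact hsub (by rw [hcoe]; simp)
  have hsd_pqt : ∀ t' : V, t' ∉ Sp → t' ≠ p → t' ≠ q →
      steinerDist G ↑({p, q, t'} : Finset V) = k + 2 := by
    intro t' htSp htp htq
    have hcard : ({p, q, t'} : Finset V).card = 3 := by
      rw [Finset.card_insert_of_notMem (by simp [hpq, Ne.symm htp]),
        Finset.card_insert_of_notMem (by simp [Ne.symm htq])]
      rfl
    have hcoe : (↑({p, q, t'} : Finset V) : Set V) = ({p, q, t'} : Set V) := by simp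
    apply le_antisymm
    · have h1 := hsd_le _ hcard
      have h2 : (Sp ∪ ↑({p, q, t'} : Finset V)).ncard = k + 3 := by
        have m1 : p ∉ insert q (insert t' Sp) := by
          simp only [Set.mem_insert_iff]; push_neg
          exact ⟨hpq, fun h => htp h.symm, hpSp⟩
        have m2 : q ∉ insert t' Sp := by
          simp only [Set.mem_insert_iff]; push_neg
          exact ⟨fun h => htq h.symm, hqSp⟩
        rw [hcoe, Set.union_comm, Set.insert_union, Set.insert_union, Set.singleton_union,
          Set.ncard_insert_of_notMem m1, Set.ncard_insert_of_notMem m2,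
          Set.ncard_insert_of_notMem htSp, hSpcard]
      rw [h2] at h1
      omega
    · have h := hsd_ge ({p, q, t'} : Finset V) (insert t' (Sp ∪ {p, q})) hcard ?_
      · have h2 : (insert t' (Sp ∪ {p, q})).ncard = k + 3 := by
          rw [Set.ncard_insert_of_notMem (by simp [htSp, htp, htq]), hpq_card]
        rw [h2] at h
        omega
      · intro H hconn hsub
        intro x hx
        rcases hx with rfl | hx
        · exact hsub (by rw [hcoe]; simp)
        · refine hverts_low H hconn ?_ ?_ hx
          · exact hsub (by rw [hcoe]; simp)
          · exact hsub (by rw [hcoe]; simp)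
  -- ecc3 for spine vertices
  have hecc_spine : ∀ v, 2 ≤ G.degree v → ecc3 G v = k + 1 := by
    intro v hv
    have hvSp : v ∈ Sp := hv
    have hvp : v ≠ p := fun h => hpSp (h ▸ hvSp)
    have hvq : v ≠ q := fun h => hqSp (h ▸ hvSp)
    have hcard : ({v, p, q} : Finset V).card = 3 := by
      rw [Finset.card_insert_of_notMem (by simp [hvp, hvq]),
        Finset.card_insert_of_notMem (by simp [hpq])]
      rfl
    have hmemb : k + 1 ∈ {m | ∃ S : Finset V, v ∈ S ∧ S.card = 3 ∧
        steinerDist G (S : Set V) = m} :=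
      ⟨({v, p, q} : Finset V), by simp, hcard, hsd_vpq v hvSp⟩
    have hbound : ∀ m ∈ {m | ∃ S : Finset V, v ∈ S ∧ S.card = 3 ∧
        steinerDist G (S : Set V) = m}, m ≤ k + 1 := by
      rintro m ⟨S, hvS, hS3, rfl⟩
      have h1 := hsd_le S hS3
      have h2 : (Sp ∪ ↑S).ncard ≤ k + 2 := by
        have hsub : Sp ∪ ↑S ⊆ Sp ∪ ↑(S.erase v) := by
          intro x hx
          rcases hx with hx | hx
          · exact Or.inl hx
          · by_cases hxv : x = v
            · exact Or.inl (hxv ▸ hvSp)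
            · exact Or.inr (by simp only [Finset.coe_erase, Set.mem_diff,
                Set.mem_singleton_iff]; exact ⟨hx, hxv⟩)
        calc (Sp ∪ ↑S).ncard ≤ (Sp ∪ ↑(S.erase v)).ncard :=
              Set.ncard_le_ncard hsub (Set.toFinite _)
          _ ≤ Sp.ncard + (↑(S.erase v) : Set V).ncard := Set.ncard_union_le _ _
          _ ≤ k + 2 := by
              rw [hSpcard, Set.ncard_coe_finset, Finset.card_erase_of_mem hvS, hS3]
      omega
    rw [ecc3]
    exact le_antisymm (csSup_le ⟨k + 1, hmemb⟩ hbound) (le_csSup ⟨k + 1, hbound⟩ hmemb)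
  -- ecc3 for leaves
  have hecc_leaf : ∀ v, G.degree v = 1 → ecc3 G v = k + 2 := by
    intro v hv
    have hvSp : v ∉ Sp := by intro h; have : 2 ≤ G.degree v := h; omega
    have hmemb : k + 2 ∈ {m | ∃ S : Finset V, v ∈ S ∧ S.card = 3 ∧
        steinerDist G (S : Set V) = m} := by
      by_cases hv1 : v = p ∨ v = q
      · refine ⟨({p, q, r} : Finset V), ?_, ?_, hsd_pqt r hrSp hrp hrq⟩
        · rcases hv1 with rfl | rfl <;> simp
        · rw [Finset.card_insert_of_notMem (by simp [hpq, Ne.symm hrp]),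
            Finset.card_insert_of_notMem (by simp [Ne.symm hrq])]
          rfl
      · push_neg at hv1
        refine ⟨({p, q, v} : Finset V), by simp, ?_, hsd_pqt v hvSp hv1.1 hv1.2⟩
        rw [Finset.card_insert_of_notMem (by simp [hpq, Ne.symm hv1.1]),
          Finset.card_insert_of_notMem (by simp [Ne.symm hv1.2])]
        rfl
    have hbound : ∀ m ∈ {m | ∃ S : Finset V, v ∈ S ∧ S.card = 3 ∧
        steinerDist G (S : Set V) = m}, m ≤ k + 2 := by
      rintro m ⟨S, hvS, hS3, rfl⟩
      have h1 := hsd_le S hS3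
      have h2 : (Sp ∪ ↑S).ncard ≤ k + 3 := by
        calc (Sp ∪ ↑S).ncard ≤ Sp.ncard + (↑S : Set V).ncard := Set.ncard_union_le _ _
          _ ≤ k + 3 := by rw [hSpcard, Set.ncard_coe_finset, hS3]
      omega
    rw [ecc3]
    exact le_antisymm (csSup_le ⟨k + 2, hmemb⟩ hbound) (le_csSup ⟨k + 2, hbound⟩ hmemb)
  -- every vertex has positive degree
  have hdeg1 : ∀ v : V, 1 ≤ G.degree v := by
    intro v
    have : Nontrivial V := Fintype.one_lt_card_iff_nontrivial.mp (by omega)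
    obtain ⟨u', hu'⟩ := exists_ne v
    obtain ⟨W⟩ := hT.isConnected.preconnected v u'
    have hWn : ¬ W.Nil := Walk.not_nil_of_ne (Ne.symm hu')
    have : 0 < G.degree v := G.degree_pos_iff_exists_adj v |>.mpr ⟨_, W.adj_snd hWn⟩
    omega
  have hfiltercard : (univ.filter (fun v => 2 ≤ G.degree v)).card = k := by
    have h1 : Sp.toFinset = univ.filter (fun v => 2 ≤ G.degree v) := by
      ext x; simp [hSpdef]
    rw [← h1, Set.toFinset_card, ← Nat.card_eq_fintype_card, Nat.card_congr e.toEquiv]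
    simp
  have hkn : k ≤ Fintype.card V := by
    rw [← hfiltercard, ← Finset.card_univ]
    exact Finset.card_le_card (Finset.filter_subset _ _)
  have hsum : ∑ v : V, (ecc3 G v : ℚ) =
      (k : ℚ) * (k + 1) + ((Fintype.card V : ℚ) - k) * (k + 2) := by
    rw [← Finset.sum_filter_add_sum_filter_not univ (fun v => 2 ≤ G.degree v)]
    have hA : ∑ v ∈ univ.filter (fun v => 2 ≤ G.degree v), (ecc3 G v : ℚ)
        = (k : ℚ) * (k + 1) := by
      rw [Finset.sum_congr rfl
        (fun v hv => by rw [hecc_spine v (Finset.mem_filter.mp hv).2])]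
      rw [Finset.sum_const, hfiltercard]
      push_cast
      ring
    have hcardB : (univ.filter (fun v => ¬ 2 ≤ G.degree v)).card = Fintype.card V - k := by
      have := Finset.card_filter_add_card_filter_not
        (s := univ) (p := fun v : V => 2 ≤ G.degree v)
      rw [hfiltercard, Finset.card_univ] at this
      omega
    have hB : ∑ v ∈ univ.filter (fun v => ¬ 2 ≤ G.degree v), (ecc3 G v : ℚ)
        = ((Fintype.card V : ℚ) - k) * (k + 2) := by
      rw [Finset.sum_congr rfl (fun v hv => by
        have h2 := (Finset.mem_filter.mp hv).2
        have h3 : G.degree v = 1 := by have := hdeg1 v; omega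
        rw [hecc_leaf v h3])]
      rw [Finset.sum_const, hcardB]
      have : ((Fintype.card V - k : ℕ) : ℚ) = (Fintype.card V : ℚ) - k := by
        push_cast [Nat.cast_sub hkn]
        ring
      rw [nsmul_eq_mul, this]
      push_cast
      ring
    rw [hA, hB]
  have hfinal : aecc3 G = (((Fintype.card V : ℚ) - 1) * k + 2 * (Fintype.card V : ℚ)) /
      (Fintype.card V : ℚ) := by
    rw [aecc3, hsum]
    congr 1
    ring
  exact ⟨hecc_spine, hecc_leaf, hfinal⟩
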